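/- The Nikolskii constant for degree 1 equals 𝒞_{1,p} = π/B((p+1)/2, 1/2) for every 1 < p < ∞; equivalently, the minimum of (1/2π)∫_{-π}^{π}|(1+e^{iθ})/2|^p dθ over degree-1 polynomials P with P(1)=1 is B((p+1)/2,1/2)/π, attained by P(z) = (1+z)/2. -/

import Mathlib

noncomputable def supNorm (P : Polynomial ℂ) : ℝ :=
  ⨆ θ : ℝ, ‖P.eval (Complex.exp (θ * Complex.I))‖

noncomputable def pNormPow (p : ℝ) (P : Polynomial ℂ) : ℝ :=
  (1 / (2 * Real.pi)) *
    ∫ θ in (-Real.pi)..Real.pi, (‖P.eval (Complex.exp (θ * Complex.I))‖) ^ p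

noncomputable def betaR (x y : ℝ) : ℝ := Real.Gamma x * Real.Gamma y / Real.Gamma (x + y)

open Complex intervalIntegral Set MeasureTheory
open scoped Real

lemma beta_ofReal (a b : ℝ) (ha : 0 < a) (hb : 0 < b) :
    Complex.betaIntegral a b = ((∫ t in (0:ℝ)..1, t ^ (a-1) * (1-t) ^ (b-1) : ℝ) : ℂ) := by
  rw [Complex.betaIntegral, ← intervalIntegral.integral_ofReal]
  refine intervalIntegral.integral_congr (fun x hx => ?_)
  rw [uIcc_of_le (by norm_num : (0:ℝ) ≤ 1)] at hx
  push_cast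
  rw [Complex.ofReal_cpow hx.1, Complex.ofReal_cpow (by linarith [hx.2]),
    Complex.ofReal_sub, Complex.ofReal_sub, Complex.ofReal_one]
  norm_num

lemma betaR_eq (a b : ℝ) (ha : 0 < a) (hb : 0 < b) :
    betaR a b = ∫ t in (0:ℝ)..1, t ^ (a-1) * (1-t) ^ (b-1) := by
  have h := Complex.Gamma_mul_Gamma_eq_betaIntegral (s := a) (t := b)
    (by simpa using ha) (by simpa using hb)
  rw [beta_ofReal a b ha hb, ← Complex.ofReal_add, Complex.Gamma_ofReal,
    Complex.Gamma_ofReal, Complex.Gamma_ofReal, ← Complex.ofReal_mul, ← Complex.ofReal_mul] at h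
  have h3 := Complex.ofReal_inj.mp h
  have hG : Real.Gamma (a+b) ≠ 0 := (Real.Gamma_pos_of_pos (by linarith)).ne'
  rw [betaR, h3]
  field_simp
lemma key_pointwise (p : ℝ) (hp1 : 1 < p) : ∀ x ∈ Ioc (0:ℝ) (π/2),
    (2 * Real.sin x * Real.cos x) *
      ((Real.sin x ^ 2) ^ (-(1:ℝ)/2) * (1 - Real.sin x ^ 2) ^ ((p-1)/2))
      = 2 * Real.cos x ^ p := by
  intro x hx
  have hpi := Real.pi_pos
  have hs : 0 < Real.sin x := Real.sin_pos_of_pos_of_lt_pi hx.1 (by linarith [hx.2])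
  have hcnn : 0 ≤ Real.cos x := Real.cos_nonneg_of_mem_Icc ⟨by linarith [hx.1], hx.2⟩
  have h1 : (Real.sin x ^ 2 : ℝ) ^ (-(1:ℝ)/2) = (Real.sin x)⁻¹ := by
    rw [← Real.rpow_natCast (Real.sin x) 2, ← Real.rpow_mul hs.le]
    norm_num
    exact Real.rpow_neg_one _
  have h2 : ((1 - Real.sin x ^ 2 : ℝ)) ^ ((p-1)/2) = Real.cos x ^ (p-1) := by
    rw [← Real.cos_sq' x, ← Real.rpow_natCast (Real.cos x) 2, ← Real.rpow_mul hcnn]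
    norm_num
    congr 1; ring
  have h3 := Real.rpow_add' hcnn (show (1:ℝ) + (p-1) ≠ 0 by intro h; linarith)
  have h4 : (1:ℝ) + (p-1) = p := by ring
  rw [h4, Real.rpow_one] at h3
  rw [h1, h2, h3]
  field_simp


set_option maxHeartbeats 1000000 in
lemma cos_int (p : ℝ) (hp1 : 1 < p) :
    ∫ t in (0:ℝ)..1, t ^ (-(1:ℝ)/2) * (1-t) ^ ((p-1)/2)
      = 2 * ∫ u in (0:ℝ)..(π/2), Real.cos u ^ p := by
  have hpi := Real.pi_pos
  have hp0 : (0:ℝ) < p := by linarith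
  set g : ℝ → ℝ := fun t => t ^ (-(1:ℝ)/2) * (1-t) ^ ((p-1)/2) with hg
  set f : ℝ → ℝ := fun u => Real.sin u ^ 2 with hf
  set F : ℝ → ℝ := fun u => 2 * Real.sin u * Real.cos u with hF
  have hc2 : Continuous fun t : ℝ => (1-t) ^ ((p-1)/2) := by
    apply Continuous.rpow_const (by continuity)
    intro x; right; linarith
  have hcospow : Continuous fun u : ℝ => Real.cos u ^ p := by
    apply Continuous.rpow_const Real.continuous_cos
    intro x; right; linarith
  have huIcc : uIcc (0:ℝ) (π/2) = Icc 0 (π/2) := uIcc_of_le (by linarith)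
  have hfderiv : ∀ x : ℝ, HasDerivAt f (F x) x := by
    intro x
    have h := (Real.hasDerivAt_sin x).fun_pow 2
    norm_num at h
    convert h using 1
  have hmem : ∀ x : ℝ, f x ∈ Icc (0:ℝ) 1 := by
    intro x
    have h1 := Real.sin_sq_le_one x
    constructor
    · rw [hf]; positivity
    · exact h1
  have hgint : IntervalIntegrable g volume 0 1 := by
    apply IntervalIntegrable.mul_continuousOn _ hc2.continuousOn
    simpa using intervalIntegrable_rpow' (a := 0) (b := 1) (r := -(1:ℝ)/2) (by norm_num)
  have hcont : ContinuousOn g (f '' Ioo (min 0 (π/2)) (max 0 (π/2))) := by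
    apply ContinuousOn.mono (s := Ioi (0:ℝ))
    · apply ContinuousOn.mul _ hc2.continuousOn
      intro t ht
      exact (Real.continuousAt_rpow_const t _ (Or.inl (ne_of_gt ht))).continuousWithinAt
    · rintro t ⟨x, hx, rfl⟩
      rw [min_eq_left (by linarith), max_eq_right (by linarith)] at hx
      have hsp : 0 < Real.sin x := Real.sin_pos_of_pos_of_lt_pi hx.1 (by linarith [hx.2])
      rw [hf]
      exact pow_pos hsp 2
  have hint1 : IntegrableOn g (f '' uIcc 0 (π/2)) := by
    have hsubset : f '' uIcc 0 (π/2) ⊆ Icc (0:ℝ) 1 := by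
      rintro t ⟨x, _, rfl⟩; exact hmem x
    have hI : IntegrableOn g (Icc (0:ℝ) 1) := by
      rw [← uIcc_of_le (by norm_num : (0:ℝ) ≤ 1), ← intervalIntegrable_iff']
      exact hgint
    exact hI.mono_set hsubset
  have hint2 : IntegrableOn (fun x => F x • (g ∘ f) x) (uIcc 0 (π/2)) := by
    rw [huIcc]
    apply IntegrableOn.congr_fun_ae ((continuous_const.mul hcospow).integrableOn_Icc)
    have hae : ∀ᵐ x : ℝ ∂(volume.restrict (Icc (0:ℝ) (π/2))), x ∈ Ioc (0:ℝ) (π/2) := by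
      rw [MeasureTheory.ae_restrict_iff' measurableSet_Icc]
      have h0 : ∀ᵐ x : ℝ, x ≠ 0 := by
        rw [MeasureTheory.ae_iff]
        simp
      filter_upwards [h0] with x hx0 hxI
      exact ⟨lt_of_le_of_ne hxI.1 (Ne.symm hx0), hxI.2⟩
    filter_upwards [hae] with x hx
    exact (key_pointwise p hp1 x hx).symm
  have hsub := intervalIntegral.integral_comp_smul_deriv''' (a := (0:ℝ)) (b := π/2)
    (f := f) (f' := F) (g := g)
    ((Real.continuous_sin.pow 2).continuousOn)
    (fun x _ => (hfderiv x).hasDerivWithinAt)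
    hcont hint1 hint2
  have hswap : ∫ x in (0:ℝ)..(π/2), F x • (g ∘ f) x = ∫ x in (0:ℝ)..(π/2), 2 * Real.cos x ^ p := by
    apply intervalIntegral.integral_congr_ae
    have hI2 : Set.uIoc (0:ℝ) (π/2) = Ioc 0 (π/2) := Set.uIoc_of_le (by linarith)
    filter_upwards with x hx
    rw [hI2] at hx
    exact key_pointwise p hp1 x hx
  rw [hswap] at hsub
  have hf0 : f 0 = 0 := by rw [hf]; simp
  have hf1 : f (π/2) = 1 := by rw [hf]; simp
  rw [hf0, hf1] at hsub
  rw [← hsub, intervalIntegral.integral_const_mul]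
lemma cos_half_sq (u : ℝ) : Real.cos (u/2)^2 = 1/2 + Real.cos u / 2 := by
  rw [Real.cos_sq, show 2*(u/2) = u by ring]

lemma supNorm_eq (a b : ℂ) :
    (⨆ θ : ℝ, ‖a + b * Complex.exp (θ * Complex.I)‖) = ‖a‖ + ‖b‖ := by
  have hub : ∀ θ : ℝ, ‖a + b * Complex.exp (θ * Complex.I)‖
      ≤ ‖a‖ + ‖b‖ := by
    intro θ
    refine (norm_add_le _ _).trans ?_
    rw [norm_mul, Complex.norm_exp_ofReal_mul_I, mul_one]
  refine le_antisymm (ciSup_le hub) ?_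
  have ha := Complex.norm_mul_exp_arg_mul_I a
  have hb := Complex.norm_mul_exp_arg_mul_I b
  have key : a + b * Complex.exp (↑(a.arg - b.arg) * Complex.I)
      = ((‖a‖ + ‖b‖ : ℝ) : ℂ) * Complex.exp (a.arg * Complex.I) := by
    nth_rewrite 1 [← ha]
    nth_rewrite 1 [← hb]
    rw [Complex.ofReal_add, add_mul]
    congr 1
    rw [mul_assoc, ← Complex.exp_add]
    congr 1
    push_cast
    ring
  have hval : ‖a + b * Complex.exp (↑(a.arg - b.arg) * Complex.I)‖
      = ‖a‖ + ‖b‖ := by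
    rw [key, norm_mul, Complex.norm_exp_ofReal_mul_I, mul_one, Complex.norm_real, Real.norm_eq_abs]
    exact abs_of_nonneg (by positivity)
  calc ‖a‖ + ‖b‖
      = ‖a + b * Complex.exp (↑(a.arg - b.arg) * Complex.I)‖ := hval.symm
    _ ≤ _ := le_ciSup (f := fun θ : ℝ => ‖a + b * Complex.exp (θ * Complex.I)‖)
        ⟨‖a‖ + ‖b‖, by rintro x ⟨θ, rfl⟩; exact hub θ⟩ (a.arg - b.arg)

lemma abs_lower (r s : ℝ) (hr : 0 ≤ r) (hs : 0 ≤ s) (u : ℝ) :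
    (r + s) * |Real.cos (u/2)| ≤ ‖(r:ℂ) + s * Complex.exp (u * Complex.I)‖ := by
  have hsq : ((r + s) * |Real.cos (u/2)|)^2
      ≤ (‖(r:ℂ) + s * Complex.exp (u * Complex.I)‖)^2 := by
    rw [Complex.sq_norm]
    have he : Complex.exp (u * Complex.I) = Real.cos u + Real.sin u * Complex.I := by
      rw [Complex.exp_mul_I]
      norm_cast
    rw [he]
    have hns : Complex.normSq ((r:ℂ) + s * (Real.cos u + Real.sin u * Complex.I))
        = (r + s * Real.cos u)^2 + (s * Real.sin u)^2 := by
      simp [Complex.normSq_apply, Complex.cos_ofReal_re, Complex.sin_ofReal_re]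
      ring
    rw [hns, mul_pow, _root_.sq_abs, cos_half_sq]
    have h1 : Real.sin u ^ 2 + Real.cos u ^ 2 = 1 := Real.sin_sq_add_cos_sq u
    have hkey : (r + s * Real.cos u)^2 + (s * Real.sin u)^2
        = r^2 + s^2 + 2*r*s*Real.cos u := by linear_combination s^2 * h1
    rw [hkey]
    nlinarith [mul_nonneg (sub_nonneg.mpr (Real.cos_le_one u)) (sq_nonneg (r-s))]
  have h0 : 0 ≤ (r + s) * |Real.cos (u/2)| := by positivity
  nlinarith [norm_nonneg ((r:ℂ) + s * Complex.exp (u * Complex.I))]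

lemma cos_half_abs (θ : ℝ) :
    ‖(1:ℂ)/2 + 1/2 * Complex.exp (θ * Complex.I)‖ = |Real.cos (θ/2)| := by
  rw [Complex.norm_def]
  have he : Complex.exp (θ * Complex.I) = Real.cos θ + Real.sin θ * Complex.I := by
    rw [Complex.exp_mul_I]; norm_cast
  rw [he]
  have hns : Complex.normSq ((1:ℂ)/2 + 1/2 * (Real.cos θ + Real.sin θ * Complex.I))
      = (1/2 + 1/2 * Real.cos θ)^2 + (1/2 * Real.sin θ)^2 := by
    simp [Complex.normSq_apply, Complex.cos_ofReal_re, Complex.sin_ofReal_re]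
    ring
  rw [hns]
  have h1 : Real.sin θ ^ 2 + Real.cos θ ^ 2 = 1 := Real.sin_sq_add_cos_sq θ
  have h2 : (1/2 + 1/2 * Real.cos θ)^2 + (1/2 * Real.sin θ)^2 = Real.cos (θ/2)^2 := by
    rw [cos_half_sq]
    nlinarith
  rw [h2, Real.sqrt_sq_eq_abs]

lemma cospow_continuous (p : ℝ) (hp1 : 1 < p) :
    Continuous fun x : ℝ => |Real.cos (x/2)| ^ p := by
  apply Continuous.rpow_const (by continuity)
  intro x; right; linarith

lemma cospow_periodic (p : ℝ) :
    Function.Periodic (fun x : ℝ => |Real.cos (x/2)| ^ p) (2*π) := by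
  intro x
  simp only
  rw [show (x+2*π)/2 = x/2 + π by ring, Real.cos_add_pi, abs_neg]

lemma full_cos_int (p : ℝ) (hp1 : 1 < p) :
    ∫ θ in (-π)..π, |Real.cos (θ/2)| ^ p = 2 * betaR ((p+1)/2) (1/2) := by
  have hpi := Real.pi_pos
  have hB : betaR ((p+1)/2) (1/2) = 2 * ∫ u in (0:ℝ)..(π/2), Real.cos u ^ p := by
    have hsymm : betaR ((p+1)/2) (1/2) = betaR (1/2) ((p+1)/2) := by
      simp only [betaR]
      rw [mul_comm, show ((p+1)/2 + 1/2 : ℝ) = 1/2 + (p+1)/2 by ring]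
    rw [hsymm, betaR_eq (1/2) ((p+1)/2) (by norm_num) (by linarith)]
    rw [show (1:ℝ)/2 - 1 = -(1:ℝ)/2 by norm_num, show ((p+1)/2 - 1 : ℝ) = (p-1)/2 by ring]
    exact cos_int p hp1
  have hcont : Continuous fun x : ℝ => |Real.cos x| ^ p := by
    apply Continuous.rpow_const (by continuity)
    intro x; right; linarith
  have h1 : ∫ θ in (-π)..π, |Real.cos (θ/2)| ^ p
      = (2:ℝ) • ∫ x in (-π/2)..(π/2), |Real.cos x| ^ p := by
    rw [intervalIntegral.integral_comp_div (fun x => |Real.cos x| ^ p) (by norm_num : (2:ℝ) ≠ 0)]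
  have h2 : ∫ x in (-π/2)..(0:ℝ), |Real.cos x| ^ p = ∫ x in (0:ℝ)..(π/2), |Real.cos x| ^ p := by
    have h3 := intervalIntegral.integral_comp_neg (a := (0:ℝ)) (b := π/2)
      (fun x => |Real.cos x| ^ p)
    simp only [Real.cos_neg, neg_zero] at h3
    rw [show (-π/2 : ℝ) = -(π/2) by ring]
    exact h3.symm
  have h4 : ∫ x in (0:ℝ)..(π/2), |Real.cos x| ^ p = ∫ x in (0:ℝ)..(π/2), Real.cos x ^ p := by
    apply intervalIntegral.integral_congr
    intro x hx
    rw [uIcc_of_le (by linarith)] at hx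
    simp only
    rw [_root_.abs_of_nonneg (Real.cos_nonneg_of_mem_Icc ⟨by linarith [hx.1], hx.2⟩)]
  have h5 : ∫ x in (-π/2)..(π/2), |Real.cos x| ^ p
      = (∫ x in (-π/2)..(0:ℝ), |Real.cos x| ^ p) + ∫ x in (0:ℝ)..(π/2), |Real.cos x| ^ p := by
    rw [intervalIntegral.integral_add_adjacent_intervals] <;>
      exact hcont.intervalIntegrable _ _
  have hfin : ∫ x in (-π/2)..(π/2), |Real.cos x| ^ p
      = 2 * ∫ x in (0:ℝ)..(π/2), Real.cos x ^ p := by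
    rw [h5, h2, h4]; ring
  rw [h1, hfin, hB]
  simp [smul_eq_mul]

lemma betaR_pos (p : ℝ) (hp1 : 1 < p) : 0 < betaR ((p+1)/2) (1/2) := by
  rw [betaR]
  have g1 := Real.Gamma_pos_of_pos (show (0:ℝ) < (p+1)/2 by linarith)
  have g2 := Real.Gamma_pos_of_pos (show (0:ℝ) < 1/2 by norm_num)
  have g3 := Real.Gamma_pos_of_pos (show (0:ℝ) < (p+1)/2 + 1/2 by linarith)
  positivity

theorem stmt14 (p : ℝ) (hp1 : 1 < p) :
    IsLeast {C : ℝ | ∀ P : Polynomial ℂ, P.natDegree ≤ 1 →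
      (supNorm P) ^ p ≤ C * pNormPow p P}
      (Real.pi / betaR ((p + 1) / 2) (1 / 2)) := by
  have hpi := Real.pi_pos
  have hp0 : (0:ℝ) < p := by linarith
  set B := betaR ((p+1)/2) (1/2) with hBdef
  have hB : 0 < B := betaR_pos p hp1
  constructor
  · -- membership
    intro P hdeg
    set a := P.coeff 0 with hadef
    set b := P.coeff 1 with hbdef
    have heval : ∀ z : ℂ, P.eval z = a + b * z := by
      intro z
      rw [Polynomial.eval_eq_sum_range' (lt_of_le_of_lt hdeg one_lt_two),
        show Finset.range 2 = Finset.range (1+1) from rfl,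
        Finset.sum_range_succ, Finset.sum_range_one, pow_zero, pow_one, mul_one]
    set r := ‖a‖ with hrdef
    set s := ‖b‖ with hsdef
    set ψ := b.arg - a.arg with hψdef
    have hsup : supNorm P = r + s := by
      rw [supNorm]
      have : (fun θ : ℝ => ‖P.eval (Complex.exp (θ * Complex.I))‖)
          = fun θ : ℝ => ‖a + b * Complex.exp (θ * Complex.I)‖ :=
        funext fun θ => by rw [heval]
      rw [this, supNorm_eq]
    -- pointwise rotation identity
    have hrot : ∀ θ : ℝ, ‖a + b * Complex.exp (θ * Complex.I)‖
        = ‖(r:ℂ) + s * Complex.exp (↑(θ + ψ) * Complex.I)‖ := by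
      intro θ
      have ha := Complex.norm_mul_exp_arg_mul_I a
      have hb := Complex.norm_mul_exp_arg_mul_I b
      have hexp : ∀ u v : ℝ, Complex.exp (↑u * Complex.I) * Complex.exp (↑v * Complex.I)
          = Complex.exp (↑(u+v) * Complex.I) := by
        intro u v; rw [← Complex.exp_add]; congr 1; push_cast; ring
      have hid : Complex.exp (↑a.arg * Complex.I)
            * ((r:ℂ) + s * Complex.exp (↑(θ + ψ) * Complex.I))
          = a + b * Complex.exp (↑θ * Complex.I) := by
        calc Complex.exp (↑a.arg * Complex.I) * ((r:ℂ) + s * Complex.exp (↑(θ + ψ) * Complex.I))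
            = ↑r * Complex.exp (↑a.arg * Complex.I)
              + ↑s * (Complex.exp (↑a.arg * Complex.I) * Complex.exp (↑(θ + ψ) * Complex.I)) := by
              ring
          _ = a + ↑s * Complex.exp (↑(a.arg + (θ + ψ)) * Complex.I) := by rw [ha, hexp]
          _ = a + ↑s * Complex.exp (↑(b.arg + θ) * Complex.I) := by
              rw [show a.arg + (θ + ψ) = b.arg + θ by rw [hψdef]; ring]
          _ = a + ↑s * (Complex.exp (↑b.arg * Complex.I) * Complex.exp (↑θ * Complex.I)) := by
              rw [hexp]
          _ = a + b * Complex.exp (↑θ * Complex.I) := by rw [← mul_assoc, hb]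
      rw [← hid, norm_mul, Complex.norm_exp_ofReal_mul_I, one_mul]
    -- pointwise lower bound
    have hptwise : ∀ θ ∈ Icc (-π) π,
        ((r + s) * |Real.cos ((θ + ψ)/2)|) ^ p
          ≤ (‖P.eval (Complex.exp (θ * Complex.I))‖) ^ p := by
      intro θ _
      apply Real.rpow_le_rpow (by positivity)
      · rw [heval, hrot]
        exact abs_lower r s (norm_nonneg a) (norm_nonneg b) (θ + ψ)
      · linarith
    -- continuity/integrability
    have hcont1 : Continuous fun θ : ℝ => (‖P.eval (Complex.exp (θ * Complex.I))‖) ^ p := by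
      apply Continuous.rpow_const
      · exact continuous_norm.comp ((P.continuous_aeval).comp
          (Complex.continuous_exp.comp (Complex.continuous_ofReal.mul continuous_const)))
      · intro x; right; linarith
    have hcont2 : Continuous fun θ : ℝ => ((r + s) * |Real.cos ((θ + ψ)/2)|) ^ p := by
      apply Continuous.rpow_const (by continuity)
      intro x; right; linarith
    have hint2' : IntervalIntegrable (fun θ : ℝ => ((r + s) * |Real.cos ((θ + ψ)/2)|) ^ p)
        MeasureTheory.volume (-π) π := hcont2.intervalIntegrable _ _
    have hint1' : IntervalIntegrable
        (fun θ : ℝ => (‖P.eval (Complex.exp (θ * Complex.I))‖) ^ p)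
        MeasureTheory.volume (-π) π := hcont1.intervalIntegrable _ _
    have hmono := intervalIntegral.integral_mono_on (by linarith : -π ≤ π)
      hint2' hint1' hptwise
    -- compute lower integral
    have hlow : ∫ θ in (-π)..π, ((r + s) * |Real.cos ((θ + ψ)/2)|) ^ p
        = (r + s) ^ p * (2 * B) := by
      have hsplit : ∀ θ : ℝ, ((r + s) * |Real.cos ((θ + ψ)/2)|) ^ p
          = (r + s) ^ p * |Real.cos ((θ + ψ)/2)| ^ p := fun θ =>
        Real.mul_rpow (by positivity) (abs_nonneg _)
      simp_rw [hsplit]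
      rw [intervalIntegral.integral_const_mul]
      congr 1
      have hshift : ∫ θ in (-π)..π, |Real.cos ((θ + ψ)/2)| ^ p
          = ∫ x in (-π + ψ)..(π + ψ), |Real.cos (x/2)| ^ p :=
        intervalIntegral.integral_comp_add_right (fun x => |Real.cos (x/2)| ^ p) ψ
      rw [hshift]
      have hper := (cospow_periodic p).intervalIntegral_add_eq (-π + ψ) (-π)
      rw [show -π + ψ + 2*π = π + ψ by ring, show -π + 2*π = π by ring] at hper
      rw [hper, full_cos_int p hp1]
    rw [hlow] at hmono
    rw [hsup, pNormPow]
    have harith : π / B * (1 / (2*π) * ∫ θ in (-π)..π,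
        (‖P.eval (Complex.exp (θ * Complex.I))‖) ^ p)
        = (∫ θ in (-π)..π, (‖P.eval (Complex.exp (θ * Complex.I))‖) ^ p) / (2*B) := by
      generalize (∫ θ in (-π)..π, (‖P.eval (Complex.exp (θ * Complex.I))‖) ^ p) = J
      field_simp
    rw [harith, le_div_iff₀ (by positivity)]
    linarith
  · -- lower bound
    intro C hC
    set P₀ : Polynomial ℂ := Polynomial.C (1/2 : ℂ) + Polynomial.C (1/2 : ℂ) * Polynomial.X with hP₀
    have hdeg₀ : P₀.natDegree ≤ 1 := by
      apply le_trans (Polynomial.natDegree_add_le _ _)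
      simp only [Polynomial.natDegree_C, max_le_iff]
      refine ⟨Nat.zero_le 1, le_trans (Polynomial.natDegree_mul_le) ?_⟩
      simp [Polynomial.natDegree_C, Polynomial.natDegree_X]
    have h := hC P₀ hdeg₀
    have heval₀ : ∀ z : ℂ, P₀.eval z = 1/2 + 1/2 * z := by intro z; simp [hP₀]
    have hsup₀ : supNorm P₀ = 1 := by
      rw [supNorm]
      have : (fun θ : ℝ => ‖P₀.eval (Complex.exp (θ * Complex.I))‖)
          = fun θ : ℝ => ‖(1:ℂ)/2 + (1:ℂ)/2 * Complex.exp (θ * Complex.I)‖ :=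
        funext fun θ => by rw [heval₀]
      rw [this, supNorm_eq]
      rw [show ((1:ℂ)/2) = (((1:ℝ)/2 : ℝ) : ℂ) by norm_num, Complex.norm_real, Real.norm_eq_abs,
        _root_.abs_of_nonneg (by norm_num : (0:ℝ) ≤ 1/2)]
      norm_num
    have hpn₀ : pNormPow p P₀ = B / π := by
      rw [pNormPow]
      have : (fun θ : ℝ => (‖P₀.eval (Complex.exp (θ * Complex.I))‖) ^ p)
          = fun θ : ℝ => |Real.cos (θ/2)| ^ p :=
        funext fun θ => by rw [heval₀, cos_half_abs]
      rw [this, full_cos_int p hp1]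
      field_simp
      ring
    rw [hsup₀, hpn₀, Real.one_rpow] at h
    rw [div_le_iff₀ hB]
    have h2 : C * (B/π) * π = C * B := by field_simp
    nlinarith
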